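/- arXiv:2604.02475 — 6 statements merged into one kernel-verified Lean document; each statement's English description precedes it below -/
import Mathlib

section
/- For every integer k ≥ 1, A(k) = F_k − 4 Σ_{s=2}^{k} H_{s-1}/s³, where A(k) = Σ_{1≤m,n≤k, m+n≥k+1} 1/(m²n²), F_k = Σ_{m=1}^{k} 1/m⁴, and H_n is the n-th harmonic number. -/
noncomputable def A (k : ℕ) : ℝ :=
  ∑ p ∈ (((Finset.Icc 1 k) ×ˢ (Finset.Icc 1 k)).filter
      (fun p => k + 1 ≤ p.1 + p.2)),
    1 / ((p.1 : ℝ) ^ 2 * (p.2 : ℝ) ^ 2)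

noncomputable def F (n : ℕ) : ℝ := ∑ m ∈ Finset.Icc 1 n, 1 / (m : ℝ) ^ 4

noncomputable def H (n : ℕ) : ℝ := ∑ m ∈ Finset.Icc 1 n, 1 / (m : ℝ)

noncomputable def auxf (m n : ℕ) : ℝ := 1 / ((m : ℝ) ^ 2 * (n : ℝ) ^ 2)

lemma refl_sum (k : ℕ) (g : ℕ → ℝ) :
    ∑ m ∈ Finset.Icc 1 k, g (k + 1 - m) = ∑ m ∈ Finset.Icc 1 k, g m := by
  apply Finset.sum_nbij' (fun m => k + 1 - m) (fun m => k + 1 - m) <;>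
    (intro a ha; simp only [Finset.mem_Icc] at *) <;> omega

lemma pt (a b : ℝ) (ha : a ≠ 0) (hb : b ≠ 0) (hab : a + b ≠ 0) :
    1/(a^2*b^2) = 1/(a+b)^2 * (1/a^2 + 1/b^2) + 2/(a+b)^3 * (1/a + 1/b) := by
  field_simp; ring

lemma D_eq (k : ℕ) :
    ∑ m ∈ Finset.Icc 1 k, auxf m (k + 1 - m)
      = 2/((k:ℝ)+1)^2 * (∑ m ∈ Finset.Icc 1 k, 1/(m:ℝ)^2)
        + 4/((k:ℝ)+1)^3 * H k := by
  have step : ∑ m ∈ Finset.Icc 1 k, auxf m (k + 1 - m)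
      = ∑ m ∈ Finset.Icc 1 k,
        (1/((k:ℝ)+1)^2 * (1/(m:ℝ)^2 + 1/((k + 1 - m : ℕ):ℝ)^2)
          + 2/((k:ℝ)+1)^3 * (1/(m:ℝ) + 1/((k + 1 - m : ℕ):ℝ))) := by
    apply Finset.sum_congr rfl
    intro m hm
    simp only [Finset.mem_Icc] at hm
    have ha : (m : ℝ) ≠ 0 := by
      exact_mod_cast (by omega : m ≠ 0)
    have hcast : ((k + 1 - m : ℕ) : ℝ) = (k : ℝ) + 1 - (m : ℝ) := by
      push_cast [Nat.cast_sub (by omega : m ≤ k + 1)]; ring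
    have hb : ((k + 1 - m : ℕ) : ℝ) ≠ 0 := by
      rw [hcast]
      have : (m : ℝ) ≤ k := by exact_mod_cast hm.2
      linarith
    have hab : (m : ℝ) + ((k + 1 - m : ℕ) : ℝ) = (k : ℝ) + 1 := by
      rw [hcast]; ring
    have := pt (m : ℝ) ((k + 1 - m : ℕ) : ℝ) ha hb (by rw [hab]; positivity)
    rw [hab] at this
    exact this
  rw [step, Finset.sum_add_distrib, ← Finset.mul_sum, ← Finset.mul_sum,
    Finset.sum_add_distrib, Finset.sum_add_distrib]
  rw [refl_sum k (fun m => 1/(m:ℝ)^2), refl_sum k (fun m => 1/(m:ℝ))]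
  rw [H]
  ring

lemma A_double (k : ℕ) : A k = ∑ m ∈ Finset.Icc 1 k, ∑ n ∈ Finset.Icc 1 k,
    if k + 1 ≤ m + n then auxf m n else 0 := by
  rw [A, Finset.sum_filter, Finset.sum_product]; rfl

lemma A_succ (k : ℕ) :
    A (k + 1) = A k + 1/((k:ℝ)+1)^4 - 4 * H k / ((k:ℝ)+1)^3 := by
  have inner : ∀ m ∈ Finset.Icc 1 k,
      (∑ n ∈ Finset.Icc 1 (k+1), if k + 2 ≤ m + n then auxf m n else 0)
        = (∑ n ∈ Finset.Icc 1 k, if k + 1 ≤ m + n then auxf m n else 0)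
          - auxf m (k + 1 - m) + auxf m (k + 1) := by
    intro m hm
    simp only [Finset.mem_Icc] at hm
    rw [Finset.sum_Icc_succ_top (by omega : 1 ≤ k + 1)]
    rw [if_pos (by omega : k + 2 ≤ m + (k + 1))]
    have key : ∀ n ∈ Finset.Icc 1 k,
        (if k+1 ≤ m+n then auxf m n else 0) - (if k+2 ≤ m+n then auxf m n else 0)
          = if n = k+1-m then auxf m n else 0 := by
      intro n hn; simp only [Finset.mem_Icc] at hn
      split_ifs <;> first | ring1 | (exfalso; omega)
    have hsub : ∑ n ∈ Finset.Icc 1 k,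
        ((if k+1 ≤ m+n then auxf m n else 0) - (if k+2 ≤ m+n then auxf m n else 0))
          = auxf m (k+1-m) := by
      rw [Finset.sum_congr rfl key, Finset.sum_ite_eq' (Finset.Icc 1 k) (k+1-m) (auxf m)]
      rw [if_pos (by simp only [Finset.mem_Icc]; omega)]
    rw [Finset.sum_sub_distrib] at hsub
    linarith
  rw [A_double (k+1), A_double k]
  rw [Finset.sum_Icc_succ_top (by omega : 1 ≤ k + 1)]
  rw [Finset.sum_congr rfl inner]
  have border : (∑ n ∈ Finset.Icc 1 (k+1), if k + 2 ≤ (k+1) + n then auxf (k+1) n else 0)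
      = ∑ n ∈ Finset.Icc 1 (k+1), auxf (k+1) n := by
    apply Finset.sum_congr rfl
    intro n hn; simp only [Finset.mem_Icc] at hn
    rw [if_pos (by omega)]
  rw [border]
  rw [Finset.sum_add_distrib, Finset.sum_sub_distrib, D_eq k]
  have e1 : ∑ m ∈ Finset.Icc 1 k, auxf m (k+1)
      = 1/((k:ℝ)+1)^2 * ∑ m ∈ Finset.Icc 1 k, 1/(m:ℝ)^2 := by
    rw [Finset.mul_sum]
    apply Finset.sum_congr rfl
    intro m hm
    simp only [auxf]
    rw [show (((k+1:ℕ)):ℝ) = (k:ℝ)+1 by push_cast; ring]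
    rw [one_div, mul_inv_rev, one_div, one_div]
  have e2 : ∑ n ∈ Finset.Icc 1 (k+1), auxf (k+1) n
      = 1/((k:ℝ)+1)^2 * (∑ m ∈ Finset.Icc 1 k, 1/(m:ℝ)^2) + 1/((k:ℝ)+1)^4 := by
    rw [Finset.sum_Icc_succ_top (by omega : 1 ≤ k + 1), Finset.mul_sum]
    congr 1
    · apply Finset.sum_congr rfl
      intro m hm
      simp only [auxf]
      rw [show (((k+1:ℕ)):ℝ) = (k:ℝ)+1 by push_cast; ring]
      rw [one_div, mul_inv_rev, one_div, one_div]
      ring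
    · simp only [auxf]
      rw [show (((k+1:ℕ)):ℝ) = (k:ℝ)+1 by push_cast; ring]
      rw [one_div, ← mul_pow]
      ring
  rw [e1, e2]
  ring

theorem A_eq_F_sub_harmonic_sum (k : ℕ) (hk : 1 ≤ k) :
    A k = F k - 4 * ∑ s ∈ Finset.Icc 2 k, H (s - 1) / (s : ℝ) ^ 3 := by
  induction k, hk using Nat.le_induction with
  | base =>
    rw [show Finset.Icc 2 1 = ∅ from Finset.Icc_eq_empty (by omega)]
    simp [A, F]
    norm_num [Finset.sum_filter, Finset.Icc_self]
  | succ n hn ih =>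
    rw [A_succ n, ih]
    have hF : F (n + 1) = F n + 1/((n:ℝ)+1)^4 := by
      rw [F, F, Finset.sum_Icc_succ_top (by omega : 1 ≤ n + 1)]
      push_cast
      ring
    have hS : ∑ s ∈ Finset.Icc 2 (n+1), H (s-1) / (s:ℝ)^3
        = (∑ s ∈ Finset.Icc 2 n, H (s-1) / (s:ℝ)^3) + H n / ((n:ℝ)+1)^3 := by
      rw [Finset.sum_Icc_succ_top (by omega : 2 ≤ n + 1)]
      norm_num
    rw [hF, hS]
    ring
end

section
/- The infinite sum 4 Σ_{s=2}^{∞} H_{s-1}/s³ converges and equals ζ(4), where H_n is the n-th harmonic number. -/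
open Finset

lemma H_eq (n : ℕ) : H n = ∑ k ∈ Finset.range n, 1 / ((k : ℝ) + 1) := by
  unfold H
  rw [show Finset.Icc 1 n = Finset.Ico 1 (n + 1) by rfl, Finset.sum_Ico_eq_sum_range]
  simp only [Nat.add_sub_cancel]
  refine Finset.sum_congr rfl fun k _ => ?_
  push_cast
  ring_nf

lemma hasSum_sum_elim {α β : Type*} {f : α → ℝ} {g : β → ℝ} {a b : ℝ}
    (hf : HasSum f a) (hg : HasSum g b) : HasSum (Sum.elim f g) (a + b) := by
  have h1 : HasSum ((Sum.elim f g) ∘ ((↑) : Set.range (Sum.inl : α → α ⊕ β) → α ⊕ β)) a :=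
    (Equiv.ofInjective _ Sum.inl_injective).hasSum_iff.mp hf
  have h2 : HasSum ((Sum.elim f g) ∘ ((↑) : Set.range (Sum.inr : β → α ⊕ β) → α ⊕ β)) b :=
    (Equiv.ofInjective _ Sum.inr_injective).hasSum_iff.mp hg
  exact HasSum.add_isCompl Set.isCompl_range_inl_range_inr h1 h2

/-- Three-way split of ℕ × ℕ into below-diagonal, above-diagonal, and diagonal. -/
def E : (ℕ × ℕ) ⊕ ((ℕ × ℕ) ⊕ ℕ) ≃ ℕ × ℕ where
  toFun x := match x with
    | .inl (m, k) => (m, m + k + 1)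
    | .inr (.inl (n, k)) => (n + k + 1, n)
    | .inr (.inr n) => (n, n)
  invFun p :=
    if p.1 < p.2 then .inl (p.1, p.2 - p.1 - 1)
    else if p.2 < p.1 then .inr (.inl (p.2, p.1 - p.2 - 1))
    else .inr (.inr p.1)
  left_inv := by
    rintro (⟨m, k⟩ | ⟨n, k⟩ | n)
    · dsimp only
      rw [if_pos (show m < m + k + 1 by omega)]
      have : m + k + 1 - m - 1 = k := by omega
      rw [this]
    · dsimp only
      rw [if_neg (show ¬ n + k + 1 < n by omega), if_pos (show n < n + k + 1 by omega)]
      have : n + k + 1 - n - 1 = k := by omega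
      rw [this]
    · dsimp only
      rw [if_neg (lt_irrefl n), if_neg (lt_irrefl n)]
  right_inv := by
    rintro ⟨a, b⟩
    rcases lt_trichotomy a b with h | h | h
    · dsimp only
      rw [if_pos h]
      have : a + (b - a - 1) + 1 = b := by omega
      dsimp only
      rw [this]
    · subst h
      dsimp only
      rw [if_neg (lt_irrefl a), if_neg (lt_irrefl a)]
    · dsimp only
      rw [if_neg (show ¬ a < b by omega), if_pos h]
      have : b + (a - b - 1) + 1 = a := by omega
      dsimp only
      rw [this]

set_option maxHeartbeats 2000000 in
theorem harmonic_sum_eq_zeta_four :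
    HasSum (fun n : ℕ => 4 * H (n + 1) / ((n : ℝ) + 2) ^ 3) (Real.pi ^ 4 / 90) := by
  -- basic zeta values, shifted
  have z2 : HasSum (fun n : ℕ => 1 / ((n : ℝ) + 1) ^ 2) (Real.pi ^ 2 / 6) := by
    have := (hasSum_nat_add_iff' (f := fun n : ℕ => 1 / (n : ℝ) ^ 2) 1).mpr hasSum_zeta_two
    simpa using this
  have z4 : HasSum (fun n : ℕ => 1 / ((n : ℝ) + 1) ^ 4) (Real.pi ^ 4 / 90) := by
    have := (hasSum_nat_add_iff' (f := fun n : ℕ => 1 / (n : ℝ) ^ 4) 1).mpr hasSum_zeta_four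
    simpa using this
  -- the two-variable functions
  set f : ℕ × ℕ → ℝ := fun p => 1 / (((p.1 : ℝ) + 1) ^ 2 * ((p.2 : ℝ) + 1) ^ 2) with hf_def
  set t1 : ℕ × ℕ → ℝ :=
    fun p => 1 / (((p.1 : ℝ) + 1) ^ 2 * ((p.1 : ℝ) + (p.2 : ℝ) + 2) ^ 2) with ht1_def
  set t2 : ℕ × ℕ → ℝ :=
    fun p => 1 / (((p.2 : ℝ) + 1) ^ 2 * ((p.1 : ℝ) + (p.2 : ℝ) + 2) ^ 2) with ht2_def
  set t3 : ℕ × ℕ → ℝ :=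
    fun p => 1 / (((p.1 : ℝ) + 1) * ((p.1 : ℝ) + (p.2 : ℝ) + 2) ^ 3) with ht3_def
  set t4 : ℕ × ℕ → ℝ :=
    fun p => 1 / (((p.2 : ℝ) + 1) * ((p.1 : ℝ) + (p.2 : ℝ) + 2) ^ 3) with ht4_def
  have hprod : Summable (fun p : ℕ × ℕ => 1 / ((p.1 : ℝ) + 1) ^ 2 * (1 / ((p.2 : ℝ) + 1) ^ 2)) :=
    z2.summable.mul_of_nonneg z2.summable (fun n => by positivity) (fun n => by positivity)
  have hfeq : (fun p : ℕ × ℕ => 1 / ((p.1 : ℝ) + 1) ^ 2 * (1 / ((p.2 : ℝ) + 1) ^ 2)) = f := by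
    funext p; simp [hf_def, div_mul_div_comm]; ring
  have hfsummable : Summable f := hfeq ▸ hprod
  have hfsum : HasSum f (Real.pi ^ 2 / 6 * (Real.pi ^ 2 / 6)) := hfeq ▸ (z2.mul z2 hprod)
  -- summability of t1, t3 by comparison
  have hst1 : Summable t1 := by
    refine hfsummable.of_nonneg_of_le (fun p => by positivity) (fun p => ?_)
    apply one_div_le_one_div_of_le (by positivity)
    have h2 : ((p.2 : ℝ) + 1) ^ 2 ≤ ((p.1 : ℝ) + (p.2 : ℝ) + 2) ^ 2 := by
      apply pow_le_pow_left₀ (by positivity)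
      linarith [Nat.cast_nonneg (α := ℝ) p.1]
    have h1 : (0:ℝ) < ((p.1 : ℝ) + 1) ^ 2 := by positivity
    nlinarith
  have hst3 : Summable t3 := by
    refine hst1.of_nonneg_of_le (fun p => by positivity) (fun p => ?_)
    apply one_div_le_one_div_of_le (by positivity)
    have h1 : ((p.1 : ℝ) + 1) ≤ ((p.1 : ℝ) + (p.2 : ℝ) + 2) := by
      linarith [Nat.cast_nonneg (α := ℝ) p.2]
    have hp1 : (0:ℝ) ≤ (p.1 : ℝ) + 1 := by positivity
    have hsq : (0:ℝ) ≤ ((p.1 : ℝ) + (p.2 : ℝ) + 2) ^ 2 := by positivity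
    have key := mul_le_mul_of_nonneg_left h1 (mul_nonneg hp1 hsq)
    nlinarith [key]
  set P : ℝ := ∑' p, t1 p with hP_def
  set A : ℝ := ∑' p, t3 p with hA_def
  have ht1sum : HasSum t1 P := hst1.hasSum
  have ht3sum : HasSum t3 A := hst3.hasSum
  -- swapped versions
  have ht2sum : HasSum t2 P := by
    have h := (Equiv.prodComm ℕ ℕ).hasSum_iff.mpr ht1sum
    have heq : (t1 ∘ (Equiv.prodComm ℕ ℕ)) = t2 := by
      funext p
      simp only [ht1_def, ht2_def, Function.comp_apply, Equiv.prodComm_apply, Prod.fst_swap,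
        Prod.snd_swap]
      ring_nf
    exact heq ▸ h
  have ht4sum : HasSum t4 A := by
    have h := (Equiv.prodComm ℕ ℕ).hasSum_iff.mpr ht3sum
    have heq : (t3 ∘ (Equiv.prodComm ℕ ℕ)) = t4 := by
      funext p
      simp only [ht3_def, ht4_def, Function.comp_apply, Equiv.prodComm_apply, Prod.fst_swap,
        Prod.snd_swap]
      ring_nf
    exact heq ▸ h
  -- Eq1 : π⁴/36 = P + (P + π⁴/90), via the three-way split
  have hsplit : HasSum (f ∘ E) (P + (P + Real.pi ^ 4 / 90)) := by
    have hdiag : HasSum (fun n : ℕ => f (n, n)) (Real.pi ^ 4 / 90) := by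
      have heq : (fun n : ℕ => f (n, n)) = fun n : ℕ => 1 / ((n : ℝ) + 1) ^ 4 := by
        funext n; simp only [hf_def]; ring_nf
      rw [heq]; exact z4
    have h1 : HasSum (fun q : ℕ × ℕ => f (q.1, q.1 + q.2 + 1)) P := by
      have heq : (fun q : ℕ × ℕ => f (q.1, q.1 + q.2 + 1)) = t1 := by
        funext q; simp only [hf_def, ht1_def]; push_cast; ring_nf
      rw [heq]; exact ht1sum
    have h2 : HasSum (fun q : ℕ × ℕ => f (q.1 + q.2 + 1, q.1)) P := by
      have heq : (fun q : ℕ × ℕ => f (q.1 + q.2 + 1, q.1)) = t1 := by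
        funext q; simp only [hf_def, ht1_def]; push_cast; ring_nf
      rw [heq]; exact ht1sum
    have hcomb := hasSum_sum_elim h1 (hasSum_sum_elim h2 hdiag)
    have heq : (Sum.elim (fun q : ℕ × ℕ => f (q.1, q.1 + q.2 + 1))
        (Sum.elim (fun q : ℕ × ℕ => f (q.1 + q.2 + 1, q.1)) (fun n : ℕ => f (n, n)))) = f ∘ E := by
      funext x
      rcases x with ⟨m, k⟩ | (⟨n, k⟩ | n) <;> rfl
    exact heq ▸ hcomb
  have hEq1 : Real.pi ^ 2 / 6 * (Real.pi ^ 2 / 6) = P + (P + Real.pi ^ 4 / 90) :=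
    hfsum.unique (E.hasSum_iff.mp hsplit)
  -- Eq2 : π⁴/36 = 2P + 4A, via the pointwise partial-fraction identity
  have hpt : ∀ p : ℕ × ℕ, f p = t1 p + t2 p + (2 * t3 p + 2 * t4 p) := by
    intro p
    have hx : ((p.1 : ℝ) + 1) ≠ 0 := by positivity
    have hy : ((p.2 : ℝ) + 1) ≠ 0 := by positivity
    have hxy : ((p.1 : ℝ) + (p.2 : ℝ) + 2) ≠ 0 := by positivity
    simp only [hf_def, ht1_def, ht2_def, ht3_def, ht4_def]
    field_simp
    ring
  have hsum2 : HasSum f (P + P + (2 * A + 2 * A)) := by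
    have h := (ht1sum.add ht2sum).add ((ht3sum.mul_left 2).add (ht4sum.mul_left 2))
    have hfe : f = fun p => t1 p + t2 p + (2 * t3 p + 2 * t4 p) := funext hpt
    rw [hfe]
    exact h
  have hEq2 : Real.pi ^ 2 / 6 * (Real.pi ^ 2 / 6) = P + P + (2 * A + 2 * A) :=
    hfsum.unique hsum2
  have hA : (4 : ℝ) * A = Real.pi ^ 4 / 90 := by linarith
  -- regroup the double sum for t3 along antidiagonals
  have hreg : HasSum (fun s : ℕ => H (s + 1) / ((s : ℝ) + 2) ^ 3) A := by
    have h := Finset.HasAntidiagonal.sigmaAntidiagonalEquivProd.hasSum_iff.mpr ht3sum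
    refine HasSum.sigma h fun s => ?_
    have hval : ∑ kl ∈ Finset.HasAntidiagonal.antidiagonal s, t3 kl = H (s + 1) / ((s : ℝ) + 2) ^ 3 := by
      rw [Finset.Nat.sum_antidiagonal_eq_sum_range_succ_mk, H_eq, Finset.sum_div]
      refine Finset.sum_congr rfl fun k hk => ?_
      rw [Finset.mem_range] at hk
      have hks : (k : ℝ) + ((s - k : ℕ) : ℝ) = (s : ℝ) := by
        rw [Nat.cast_sub (by omega)]; ring
      simp only [ht3_def]
      rw [hks, div_div]
    have hfin := hasSum_fintype (fun c : {x // x ∈ Finset.HasAntidiagonal.antidiagonal s} => t3 c.val)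
    rw [Finset.sum_coe_sort, hval] at hfin
    exact hfin
  have h4 := hreg.mul_left 4
  rw [hA] at h4
  simpa [mul_div_assoc] using h4
end

section
/- For every integer k ≥ 1, A(k) = 4 Σ_{s=k+1}^{∞} H_{s-1}/s³ − Σ_{s=k+1}^{∞} 1/s⁴, where A(k) = Σ_{1≤m,n≤k, m+n≥k+1} 1/(m²n²) and H_n is the n-th harmonic number. -/
lemma A_eq_double (k : ℕ) :
    A k = ∑ m ∈ Finset.Icc 1 k, ∑ n ∈ Finset.Icc (k+1-m) k, 1/((m:ℝ)^2*(n:ℝ)^2) := by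
  rw [A, Finset.sum_filter, Finset.sum_product]
  refine Finset.sum_congr rfl fun m hm => ?_
  rw [← Finset.sum_filter]
  apply Finset.sum_congr _ fun n _ => rfl
  simp only [Finset.mem_Icc] at hm
  ext n
  simp only [Finset.mem_filter, Finset.mem_Icc]
  omega

lemma reflect (k : ℕ) (φ : ℕ → ℝ) :
    ∑ m ∈ Finset.Icc 1 k, φ (k+1-m) = ∑ m ∈ Finset.Icc 1 k, φ m := by
  refine Finset.sum_nbij' (i := fun m => k+1-m) (j := fun m => k+1-m)
    ?_ ?_ ?_ ?_ ?_
  all_goals simp only [Finset.mem_Icc]; intros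
  · omega
  · omega
  · omega
  · omega
  · trivial

lemma pf_sum (k : ℕ) :
    ∑ m ∈ Finset.Icc 1 k, 1/((m:ℝ)^2 * ((k+1-m : ℕ):ℝ)^2)
      = 2/((k:ℝ)+1)^2 * (∑ m ∈ Finset.Icc 1 k, 1/(m:ℝ)^2)
        + 4/((k:ℝ)+1)^3 * H k := by
  have key : ∀ m ∈ Finset.Icc 1 k,
      1/((m:ℝ)^2 * ((k+1-m : ℕ):ℝ)^2)
        = (1/((k:ℝ)+1)^2) * (1/(m:ℝ)^2 + 1/((k+1-m:ℕ):ℝ)^2)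
          + (2/((k:ℝ)+1)^3) * (1/(m:ℝ) + 1/((k+1-m:ℕ):ℝ)) := by
    intro m hm
    simp only [Finset.mem_Icc] at hm
    have ha : (0:ℝ) < (m:ℝ) := by exact_mod_cast hm.1
    have hb : (0:ℝ) < ((k+1-m:ℕ):ℝ) := by
      have h1 : 0 < k+1-m := by omega
      exact_mod_cast h1
    have hab : (m:ℝ) + ((k+1-m:ℕ):ℝ) = (k:ℝ)+1 := by
      have h2 : m + (k+1-m) = k+1 := by omega
      exact_mod_cast h2
    set a := (m:ℝ) with hadef; set b := ((k+1-m:ℕ):ℝ) with hbdef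
    rw [← hab]
    have ha' : a ≠ 0 := ne_of_gt ha
    have hb' : b ≠ 0 := ne_of_gt hb
    have hab' : a + b ≠ 0 := by positivity
    field_simp
    ring
  rw [Finset.sum_congr rfl key, Finset.sum_add_distrib, ← Finset.mul_sum, ← Finset.mul_sum,
      Finset.sum_add_distrib, Finset.sum_add_distrib,
      reflect k (fun n => 1/(n:ℝ)^2), reflect k (fun n => 1/(n:ℝ))]
  rw [H]; ring

lemma A_diff (k : ℕ) :
    A k - A (k+1) = 4 * H k / ((k:ℝ)+1)^3 - 1/((k:ℝ)+1)^4 := by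
  have hsplit : ∀ m ∈ Finset.Icc 1 k,
      (∑ n ∈ Finset.Icc (k+1-m) k, 1/((m:ℝ)^2*(n:ℝ)^2))
        - (∑ n ∈ Finset.Icc (k+1+1-m) (k+1), 1/((m:ℝ)^2*(n:ℝ)^2))
      = 1/((m:ℝ)^2*(((k+1-m:ℕ)):ℝ)^2) - 1/((m:ℝ)^2*(((k+1:ℕ)):ℝ)^2) := by
    intro m hm
    simp only [Finset.mem_Icc] at hm
    have h1 : Finset.Icc (k+1-m) k = insert (k+1-m) (Finset.Icc (k+1+1-m) k) := by
      ext x; simp only [Finset.mem_insert, Finset.mem_Icc]; omega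
    have h2 : (k+1-m) ∉ Finset.Icc (k+1+1-m) k := by
      simp only [Finset.mem_Icc]; omega
    rw [h1, Finset.sum_insert h2, Finset.sum_Icc_succ_top (by omega : k+1+1-m ≤ k+1)]
    push_cast
    ring
  rw [A_eq_double, A_eq_double,
      Finset.sum_Icc_succ_top (by omega : 1 ≤ k+1)]
  have hlow : k+1+1-(k+1) = 1 := by omega
  rw [hlow, sub_add_eq_sub_sub, ← Finset.sum_sub_distrib,
      Finset.sum_congr rfl hsplit, Finset.sum_sub_distrib, pf_sum]
  have e1 : ∑ m ∈ Finset.Icc 1 k, 1/((m:ℝ)^2*(((k+1:ℕ)):ℝ)^2)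
      = (1/((k:ℝ)+1)^2) * ∑ m ∈ Finset.Icc 1 k, 1/(m:ℝ)^2 := by
    rw [Finset.mul_sum]
    refine Finset.sum_congr rfl fun m _ => ?_
    push_cast; rw [one_div, mul_inv]; ring
  have e2 : ∑ n ∈ Finset.Icc 1 (k+1), 1/((((k+1:ℕ)):ℝ)^2*(n:ℝ)^2)
      = (1/((k:ℝ)+1)^2) * ((∑ m ∈ Finset.Icc 1 k, 1/(m:ℝ)^2) + 1/((k:ℝ)+1)^2) := by
    rw [Finset.sum_Icc_succ_top (by omega : 1 ≤ k+1), mul_add, Finset.mul_sum]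
    congr 1
    · refine Finset.sum_congr rfl fun n _ => ?_
      push_cast; rw [one_div, mul_inv]; ring
    · push_cast; rw [one_div, mul_inv]; ring
  rw [e1, e2]
  have hs : ((k:ℝ)+1) ≠ 0 := by positivity
  field_simp
  ring

lemma H_nonneg (k : ℕ) : 0 ≤ H k :=
  Finset.sum_nonneg fun i _ => by positivity

lemma A_nonneg (k : ℕ) : 0 ≤ A k :=
  Finset.sum_nonneg fun p _ => by positivity

lemma H_le_cast (k : ℕ) : H k ≤ (k : ℝ) := by
  calc H k ≤ ∑ m ∈ Finset.Icc 1 k, (1:ℝ) := by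
        refine Finset.sum_le_sum fun i hi => ?_
        simp only [Finset.mem_Icc] at hi
        have : (1:ℝ) ≤ (i:ℝ) := by exact_mod_cast hi.1
        rw [div_le_one (by linarith)]; linarith
    _ = (k : ℝ) := by simp

lemma H_le_log (k : ℕ) : H k ≤ 1 + Real.log k := by
  have hH : H k = (harmonic k : ℝ) := by
    rw [H, harmonic_eq_sum_Icc]
    push_cast
    simp [one_div]
  rw [hH]
  exact harmonic_le_one_add_log k

lemma A_le (k : ℕ) (hk : 1 ≤ k) : A k ≤ (H k)^2 / k := by
  have hkR : (0:ℝ) < k := by exact_mod_cast hk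
  have step1 : A k ≤ ∑ p ∈ (((Finset.Icc 1 k) ×ˢ (Finset.Icc 1 k)).filter
      (fun p => k + 1 ≤ p.1 + p.2)), (1/(k:ℝ)) * ((1/(p.1:ℝ)) * (1/(p.2:ℝ))) := by
    rw [A]
    refine Finset.sum_le_sum fun p hp => ?_
    simp only [Finset.mem_filter, Finset.mem_product, Finset.mem_Icc] at hp
    obtain ⟨⟨⟨hm1, _⟩, ⟨hn1, _⟩⟩, hsum⟩ := hp
    have hm : (1:ℝ) ≤ (p.1:ℝ) := by exact_mod_cast hm1
    have hn : (1:ℝ) ≤ (p.2:ℝ) := by exact_mod_cast hn1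
    have hs : (k:ℝ) + 1 ≤ (p.1:ℝ) + (p.2:ℝ) := by exact_mod_cast hsum
    have hkmn : (k:ℝ) * ((p.1:ℝ) * (p.2:ℝ)) ≤ (p.1:ℝ)^2 * (p.2:ℝ)^2 := by
      nlinarith [mul_nonneg (sub_nonneg.2 hm) (sub_nonneg.2 hn)]
    calc 1/((p.1:ℝ)^2 * (p.2:ℝ)^2) ≤ 1/((k:ℝ) * ((p.1:ℝ) * (p.2:ℝ))) := by
          apply one_div_le_one_div_of_le (by positivity) hkmn
      _ = (1/(k:ℝ)) * ((1/(p.1:ℝ)) * (1/(p.2:ℝ))) := by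
          rw [one_div, one_div, one_div, one_div, mul_inv, mul_inv]
  have step2 : ∑ p ∈ (((Finset.Icc 1 k) ×ˢ (Finset.Icc 1 k)).filter
      (fun p => k + 1 ≤ p.1 + p.2)), (1/(k:ℝ)) * ((1/(p.1:ℝ)) * (1/(p.2:ℝ)))
      ≤ ∑ p ∈ ((Finset.Icc 1 k) ×ˢ (Finset.Icc 1 k)),
          (1/(k:ℝ)) * ((1/(p.1:ℝ)) * (1/(p.2:ℝ))) := by
    refine Finset.sum_le_sum_of_subset_of_nonneg (Finset.filter_subset _ _)
      fun p _ _ => by positivity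
  have step3 : ∑ p ∈ ((Finset.Icc 1 k) ×ˢ (Finset.Icc 1 k)),
      (1/(k:ℝ)) * ((1/(p.1:ℝ)) * (1/(p.2:ℝ))) = (H k)^2 / k := by
    rw [← Finset.mul_sum]
    rw [show (∑ p ∈ ((Finset.Icc 1 k) ×ˢ (Finset.Icc 1 k)),
        ((1/(p.1:ℝ)) * (1/(p.2:ℝ)))) = (H k) * (H k) from ?_]
    · rw [sq]; ring
    · rw [H, Finset.sum_mul_sum]
      rw [Finset.sum_product]
  linarith

lemma A_tendsto : Filter.Tendsto (fun k : ℕ => A k) Filter.atTop (nhds 0) := by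
  have hbound : Filter.Tendsto (fun x : ℝ => (1 + Real.log x)^2 / x)
      Filter.atTop (nhds 0) := by
    have h0 := Real.tendsto_pow_log_div_mul_add_atTop 1 0 0 one_ne_zero
    have h1 := Real.tendsto_pow_log_div_mul_add_atTop 1 0 1 one_ne_zero
    have h2 := Real.tendsto_pow_log_div_mul_add_atTop 1 0 2 one_ne_zero
    simp only [one_mul, add_zero, pow_one, pow_zero] at h0 h1 h2
    have := (h0.add ((h1.const_mul 2).add h2))
    simp only [add_zero, mul_zero] at this
    refine this.congr fun x => ?_
    ring
  have hcomp : Filter.Tendsto (fun k : ℕ => (1 + Real.log k)^2 / k)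
      Filter.atTop (nhds 0) := hbound.comp tendsto_natCast_atTop_atTop
  refine squeeze_zero' (Filter.Eventually.of_forall fun k => A_nonneg k) ?_ hcomp
  filter_upwards [Filter.eventually_ge_atTop 1] with k hk
  refine (A_le k hk).trans ?_
  have hkR : (0:ℝ) < k := by exact_mod_cast hk
  have h1 : H k ≤ 1 + Real.log k := H_le_log k
  have h2 : (0:ℝ) ≤ H k := H_nonneg k
  gcongr

lemma base_summable : Summable (fun n : ℕ => 1/((n:ℝ)+1)^2) := by
  have h := Real.summable_one_div_nat_pow.mpr (le_refl 2)
  have h2 := (summable_nat_add_iff 1).mpr h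
  refine h2.congr fun n => ?_
  push_cast
  ring

lemma aux_sq_le (n k : ℕ) : ((n:ℝ)+1)^2 ≤ ((n:ℝ)+(k:ℝ)+1)^4 := by
  have h0 : (0:ℝ) ≤ (k:ℝ) := Nat.cast_nonneg k
  have hn : (0:ℝ) ≤ (n:ℝ) := Nat.cast_nonneg n
  have hy1 : (1:ℝ) ≤ (n:ℝ)+(k:ℝ)+1 := by linarith
  have hy2 : (1:ℝ) ≤ ((n:ℝ)+(k:ℝ)+1)^2 := by nlinarith
  calc ((n:ℝ)+1)^2 ≤ ((n:ℝ)+(k:ℝ)+1)^2 := by nlinarith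
    _ ≤ ((n:ℝ)+(k:ℝ)+1)^4 := by nlinarith

lemma summable_h (k : ℕ) : Summable (fun n : ℕ => 1/((n:ℝ)+(k:ℝ)+1)^4) := by
  have h0 : (0:ℝ) ≤ (k:ℝ) := Nat.cast_nonneg k
  refine Summable.of_nonneg_of_le (fun n => by positivity) (fun n => ?_) base_summable
  exact one_div_le_one_div_of_le (by positivity) (aux_sq_le n k)

lemma summable_g (k : ℕ) : Summable (fun n : ℕ => H (n+k) / ((n:ℝ)+(k:ℝ)+1)^3) := by
  have h0 : (0:ℝ) ≤ (k:ℝ) := Nat.cast_nonneg k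
  refine Summable.of_nonneg_of_le
    (fun n => div_nonneg (H_nonneg _) (by positivity)) (fun n => ?_) base_summable
  have hn : (0:ℝ) ≤ (n:ℝ) := Nat.cast_nonneg n
  have hH : H (n+k) ≤ (n:ℝ) + (k:ℝ) + 1 := by
    refine (H_le_cast (n+k)).trans ?_
    push_cast; linarith
  rw [div_le_div_iff₀ (by positivity) (by positivity), one_mul]
  calc H (n+k) * ((n:ℝ)+1)^2 ≤ ((n:ℝ)+(k:ℝ)+1) * ((n:ℝ)+(k:ℝ)+1)^2 := by
        refine mul_le_mul hH ?_ (by positivity) (by positivity)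
        nlinarith
    _ = ((n:ℝ)+(k:ℝ)+1)^3 := by ring

theorem A_eq_tail_sums (k : ℕ) (hk : 1 ≤ k) :
    A k = 4 * (∑' n : ℕ, H (n + k) / ((n : ℝ) + (k : ℝ) + 1) ^ 3)
        - ∑' n : ℕ, 1 / ((n : ℝ) + (k : ℝ) + 1) ^ 4 := by
  set g : ℕ → ℝ := fun n => H (n + k) / ((n : ℝ) + (k : ℝ) + 1) ^ 3 with hg_def
  set h : ℕ → ℝ := fun n => 1 / ((n : ℝ) + (k : ℝ) + 1) ^ 4 with hh_def
  have hg : Summable g := summable_g k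
  have hh : Summable h := summable_h k
  set d : ℕ → ℝ := fun n => 4 * g n - h n with hd_def
  have hd : Summable d := (hg.mul_left 4).sub hh
  have hterm : ∀ n : ℕ, d n = A (k + n) - A (k + n + 1) := by
    intro n
    rw [A_diff (k + n), hd_def]
    simp only [hg_def, hh_def]
    rw [Nat.add_comm k n]
    push_cast
    ring
  have hpartial : ∀ N : ℕ, ∑ n ∈ Finset.range N, d n = A k - A (k + N) := by
    intro N
    have := Finset.sum_range_sub' (fun j => A (k + j)) N
    simp only [Nat.add_zero] at this
    rw [← this]
    exact Finset.sum_congr rfl fun n _ => hterm n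
  have hlim : Filter.Tendsto (fun N => ∑ n ∈ Finset.range N, d n)
      Filter.atTop (nhds (A k)) := by
    have h1 : Filter.Tendsto (fun N : ℕ => A (k + N)) Filter.atTop (nhds 0) :=
      A_tendsto.comp (by simpa [Nat.add_comm] using Filter.tendsto_add_atTop_nat k)
    have h2 : Filter.Tendsto (fun N : ℕ => A k - A (k + N)) Filter.atTop
        (nhds (A k - 0)) := Filter.Tendsto.sub tendsto_const_nhds h1
    simp only [sub_zero] at h2
    exact h2.congr fun N => (hpartial N).symm
  have htsum : ∑' n, d n = A k :=
    tendsto_nhds_unique hd.hasSum.tendsto_sum_nat hlim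
  rw [← htsum, hd_def, Summable.tsum_sub (hg.mul_left 4) hh, tsum_mul_left]
end

section
/- For every integer n ≥ 1, |H_n − log n − γ − 1/(2n)| < 1/(10n²), where H_n is the n-th harmonic number and γ is the Euler–Mascheroni constant. -/
open Real Filter

lemma auxG (x : ℝ) (hx : 0 < x) :
    Real.log (1+x) < x/2 + x/(2*(1+x)) := by
  have hder : ∀ y : ℝ, 0 ≤ y →
      HasDerivAt (fun y : ℝ => y/2 + y/(2*(1+y)) - Real.log (1+y))
        (y^2/(2*(1+y)^2)) y := by
    intro y hy
    have h1 : (0:ℝ) < 1 + y := by linarith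
    have d1 : HasDerivAt (fun y : ℝ => y/2) (1/2) y := by
      simpa using (hasDerivAt_id y).div_const 2
    have d2 : HasDerivAt (fun y : ℝ => 2*(1+y)) (2*1) y :=
      ((hasDerivAt_id y).const_add 1).const_mul 2
    have d3 : HasDerivAt (fun y : ℝ => y/(2*(1+y)))
        ((1*(2*(1+y)) - y*(2*1))/(2*(1+y))^2) y :=
      (hasDerivAt_id y).div d2 (by positivity)
    have d4 : HasDerivAt (fun y : ℝ => Real.log (1+y)) (1/(1+y)) y := by
      simpa using (((hasDerivAt_id y).const_add 1).log (ne_of_gt h1))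
    have := (d1.add d3).sub d4
    refine this.congr_deriv ?_
    field_simp
    ring
  have key : StrictMonoOn (fun y : ℝ => y/2 + y/(2*(1+y)) - Real.log (1+y)) (Set.Ici 0) := by
    apply strictMonoOn_of_deriv_pos (convex_Ici 0)
    · exact fun y hy => ((hder y hy).differentiableAt.continuousAt).continuousWithinAt
    · intro y hy
      rw [interior_Ici] at hy
      rw [(hder y hy.le).deriv]
      have h1 : (0:ℝ) < 1 + y := by linarith [Set.mem_Ioi.mp hy]
      exact div_pos (pow_pos (Set.mem_Ioi.mp hy) 2) (by positivity)
  have h0 := key (Set.self_mem_Ici) (Set.mem_Ici.mpr hx.le) hx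
  simp at h0
  linarith

lemma auxF (x : ℝ) (hx : 0 < x) :
    x/2 + x/(2*(1+x)) - x^3*(x+2)/(12*(1+x)^2) < Real.log (1+x) := by
  have hder : ∀ y : ℝ, 0 ≤ y →
      HasDerivAt (fun y : ℝ => Real.log (1+y) - (y/2 + y/(2*(1+y))) + y^3*(y+2)/(12*(1+y)^2))
        (y^4/(6*(1+y)^3)) y := by
    intro y hy
    have h1 : (0:ℝ) < 1 + y := by linarith
    have d1 : HasDerivAt (fun y : ℝ => y/2) (1/2) y := by
      simpa using (hasDerivAt_id y).div_const 2
    have d2 : HasDerivAt (fun y : ℝ => 2*(1+y)) (2*1) y :=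
      ((hasDerivAt_id y).const_add 1).const_mul 2
    have d3 : HasDerivAt (fun y : ℝ => y/(2*(1+y)))
        ((1*(2*(1+y)) - y*(2*1))/(2*(1+y))^2) y :=
      (hasDerivAt_id y).div d2 (by positivity)
    have d4 : HasDerivAt (fun y : ℝ => Real.log (1+y)) (1/(1+y)) y := by
      simpa using (((hasDerivAt_id y).const_add 1).log (ne_of_gt h1))
    have dnum : HasDerivAt (fun y : ℝ => y^3*(y+2))
        (3*y^2*(y+2) + y^3*1) y := by
      have := (hasDerivAt_pow 3 y).mul ((hasDerivAt_id y).add_const 2)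
      refine this.congr_deriv ?_
      simp
    have dden : HasDerivAt (fun y : ℝ => 12*(1+y)^2) (12*(2*(1+y)^1*1)) y := by
      exact (((hasDerivAt_id y).const_add 1).pow 2).const_mul 12
    have d5 : HasDerivAt (fun y : ℝ => y^3*(y+2)/(12*(1+y)^2))
        (((3*y^2*(y+2) + y^3*1)*(12*(1+y)^2) - y^3*(y+2)*(12*(2*(1+y)^1*1)))/(12*(1+y)^2)^2) y :=
      dnum.div dden (by positivity)
    have := (d4.sub (d1.add d3)).add d5
    refine this.congr_deriv ?_
    field_simp
    ring
  have key : StrictMonoOn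
      (fun y : ℝ => Real.log (1+y) - (y/2 + y/(2*(1+y))) + y^3*(y+2)/(12*(1+y)^2))
      (Set.Ici 0) := by
    apply strictMonoOn_of_deriv_pos (convex_Ici 0)
    · exact fun y hy => ((hder y hy).differentiableAt.continuousAt).continuousWithinAt
    · intro y hy
      rw [interior_Ici] at hy
      rw [(hder y hy.le).deriv]
      have hy' := Set.mem_Ioi.mp hy
      have h1 : (0:ℝ) < 1 + y := by linarith
      exact div_pos (pow_pos hy' 4) (by positivity)
  have h0 := key (Set.self_mem_Ici) (Set.mem_Ici.mpr hx.le) hx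
  simp at h0
  linarith

lemma keyG (t : ℝ) (ht : 1 ≤ t) :
    Real.log (t+1) - Real.log t < 1/(2*t) + 1/(2*(t+1)) := by
  have ht0 : (0:ℝ) < t := by linarith
  have ht1 : (0:ℝ) < t + 1 := by linarith
  have h := auxG (1/t) (by positivity)
  have e1 : (1:ℝ) + 1/t = (t+1)/t := by field_simp
  rw [e1, Real.log_div (by positivity) (by positivity)] at h
  have e2 : (1/t)/2 + (1/t)/(2*((t+1)/t)) = 1/(2*t) + 1/(2*(t+1)) := by
    field_simp
  linarith [e2 ▸ h]

lemma keyF (t : ℝ) (ht : 1 ≤ t) :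
    1/(2*t) + 1/(2*(t+1)) - (1/(12*t^2) - 1/(12*(t+1)^2)) < Real.log (t+1) - Real.log t := by
  have ht0 : (0:ℝ) < t := by linarith
  have ht1 : (0:ℝ) < t + 1 := by linarith
  have h := auxF (1/t) (by positivity)
  have e1 : (1:ℝ) + 1/t = (t+1)/t := by field_simp
  rw [e1, Real.log_div (by positivity) (by positivity)] at h
  have e2 : (1/t)/2 + (1/t)/(2*((t+1)/t)) - (1/t)^3*((1/t)+2)/(12*((t+1)/t)^2)
      = 1/(2*t) + 1/(2*(t+1)) - (1/(12*t^2) - 1/(12*(t+1)^2)) := by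
    field_simp
    ring
  linarith [e2 ▸ h]

noncomputable def aa (k : ℕ) : ℝ := H k - Real.log k - 1/(2*(k:ℝ))

noncomputable def bb (k : ℕ) : ℝ := aa k + 1/(12*(k:ℝ)^2)

lemma H_succ (n : ℕ) : H (n+1) = H n + 1/((n:ℝ)+1) := by
  rw [H, H, Finset.sum_Icc_succ_top (by omega)]
  push_cast
  ring

lemma H_eq_harmonic (n : ℕ) : H n = (harmonic n : ℝ) := by
  induction n with
  | zero => simp [H]
  | succ k ih => rw [H_succ, harmonic_succ, ih]; push_cast; ring

lemma aa_step {k : ℕ} (hk : 1 ≤ k) :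
    aa k < aa (k+1) ∧
    aa (k+1) + 1/(12*((k:ℝ)+1)^2) < aa k + 1/(12*(k:ℝ)^2) := by
  have ht : (1:ℝ) ≤ (k:ℝ) := by exact_mod_cast hk
  have ht0 : (0:ℝ) < (k:ℝ) := by linarith
  have ht1 : (0:ℝ) < (k:ℝ)+1 := by linarith
  have hG := keyG k ht
  have hF := keyF k ht
  have hd : aa (k+1) - aa k
      = 1/(2*(k:ℝ)) + 1/(2*((k:ℝ)+1)) - (Real.log ((k:ℝ)+1) - Real.log k) := by
    rw [aa, aa, H_succ]
    push_cast
    have : 1/((k:ℝ)+1) - 1/(2*((k:ℝ)+1)) = 1/(2*((k:ℝ)+1)) := by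
      field_simp; ring
    ring_nf
    ring_nf at this
    linarith
  constructor
  · linarith
  · linarith

lemma tendsto_aa : Tendsto aa atTop (nhds Real.eulerMascheroniConstant) := by
  have h1 : Tendsto (fun k : ℕ => Real.eulerMascheroniSeq' k) atTop
      (nhds Real.eulerMascheroniConstant) := Real.tendsto_eulerMascheroniSeq'
  have h2 : Tendsto (fun k : ℕ => 1/(2*(k:ℝ))) atTop (nhds 0) := by
    have := tendsto_one_div_atTop_nhds_zero_nat.const_mul (1/2 : ℝ)
    simpa [div_eq_mul_inv, mul_comm, mul_assoc, mul_inv] using this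
  have h3 := h1.sub h2
  rw [sub_zero] at h3
  apply h3.congr'
  filter_upwards [eventually_ge_atTop 1] with k hk
  have hk0 : k ≠ 0 := by omega
  simp only [Real.eulerMascheroniSeq', hk0, if_false, aa, H_eq_harmonic]

lemma aa_mono {k m : ℕ} (hk : 1 ≤ k) (hm : k ≤ m) : aa k ≤ aa m := by
  induction m, hm using Nat.le_induction with
  | base => exact le_refl _
  | succ m hm ih => exact ih.trans (aa_step (hk.trans hm)).1.le

lemma bb_anti {k m : ℕ} (hk : 1 ≤ k) (hm : k ≤ m) : bb m ≤ bb k := by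
  induction m, hm using Nat.le_induction with
  | base => exact le_refl _
  | succ m hm ih =>
    refine le_trans ?_ ih
    have := (aa_step (hk.trans hm)).2
    simp only [bb]
    push_cast
    linarith

lemma tendsto_bb : Tendsto bb atTop (nhds Real.eulerMascheroniConstant) := by
  have h2 : Tendsto (fun k : ℕ => 1/(12*(k:ℝ)^2)) atTop (nhds 0) := by
    have h := tendsto_one_div_atTop_nhds_zero_nat (𝕜 := ℝ)
    have h' := (h.mul h).const_mul (1/12 : ℝ)
    rw [mul_zero, mul_zero] at h'
    exact h'.congr fun k => by ring
  have h3 := tendsto_aa.add h2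
  rw [add_zero] at h3
  exact h3

theorem harmonic_approx (n : ℕ) (hn : 1 ≤ n) :
    |H n - Real.log n - Real.eulerMascheroniConstant - 1 / (2 * (n : ℝ))| <
      1 / (10 * (n : ℝ) ^ 2) := by
  have ht : (1:ℝ) ≤ (n:ℝ) := by exact_mod_cast hn
  have hn2 : (0:ℝ) < (n:ℝ)^2 := by positivity
  have hlt : aa n < Real.eulerMascheroniConstant := by
    have h1 : aa (n+1) ≤ Real.eulerMascheroniConstant := by
      apply ge_of_tendsto tendsto_aa
      filter_upwards [eventually_ge_atTop (n+1)] with m hm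
      exact aa_mono (by omega) hm
    exact lt_of_lt_of_le (aa_step hn).1 h1
  have hgt : Real.eulerMascheroniConstant < bb n := by
    have h1 : Real.eulerMascheroniConstant ≤ bb (n+1) := by
      apply le_of_tendsto tendsto_bb
      filter_upwards [eventually_ge_atTop (n+1)] with m hm
      exact bb_anti (by omega) hm
    have h2 : bb (n+1) < bb n := by
      have := (aa_step hn).2
      simp only [bb]; push_cast; linarith
    linarith
  have hcmp : 1/(12*(n:ℝ)^2) < 1/(10*(n:ℝ)^2) := by
    apply div_lt_div_of_pos_left one_pos (by positivity)
    nlinarith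
  have : H n - Real.log n - Real.eulerMascheroniConstant - 1 / (2 * (n:ℝ)) = aa n - Real.eulerMascheroniConstant := by
    simp only [aa]; ring
  rw [this, abs_lt]
  have hb : bb n = aa n + 1/(12*(n:ℝ)^2) := rfl
  constructor
  · nlinarith
  · nlinarith
end

section
/- For every positive integer N, |Σ_{d=1}^{N} μ(d)/d| ≤ 1, where μ is the Möbius function. -/
open ArithmeticFunction Finset

lemma sum_divisors_moebius (n : ℕ) :
    ∑ d ∈ n.divisors, (moebius d : ℤ) = if n = 1 then 1 else 0 := by
  rw [← coe_mul_zeta_apply, moebius_mul_coe_zeta, ArithmeticFunction.one_apply]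

lemma key_identity (N : ℕ) (hN : 0 < N) :
    ∑ d ∈ Finset.Icc 1 N, (moebius d : ℤ) * (N / d : ℕ) = 1 := by
  have hIcc : Finset.Icc 1 N = Finset.Ioc 0 N := Finset.Icc_add_one_left_eq_Ioc 0 N
  have h1 : ∀ d ∈ Finset.Icc 1 N, (moebius d : ℤ) * (N / d : ℕ)
      = ∑ n ∈ Finset.Icc 1 N, if d ∣ n then (moebius d : ℤ) else 0 := by
    intro d _
    rw [← Finset.sum_filter, Finset.sum_const, hIcc, Nat.Ioc_filter_dvd_card_eq_div]
    ring
  rw [Finset.sum_congr rfl h1, Finset.sum_comm]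
  have h2 : ∀ n ∈ Finset.Icc 1 N,
      (∑ d ∈ Finset.Icc 1 N, if d ∣ n then (moebius d : ℤ) else 0)
      = if n = 1 then 1 else 0 := by
    intro n hn
    simp only [Finset.mem_Icc] at hn
    rw [← Finset.sum_filter, ← sum_divisors_moebius n]
    apply Finset.sum_congr _ (fun _ _ => rfl)
    ext d
    simp only [Finset.mem_filter, Finset.mem_Icc, Nat.mem_divisors]
    constructor
    · rintro ⟨_, hd⟩; exact ⟨hd, by omega⟩
    · rintro ⟨hd, _⟩
      exact ⟨⟨Nat.one_le_iff_ne_zero.2 (by rintro rfl; simp at hd; omega),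
        le_trans (Nat.le_of_dvd (by omega) hd) hn.2⟩, hd⟩
  rw [Finset.sum_congr rfl h2, Finset.sum_ite_eq' (Finset.Icc 1 N) 1 (fun _ => (1:ℤ)),
    if_pos (Finset.mem_Icc.2 ⟨le_refl 1, hN⟩)]

theorem abs_sum_moebius_div_le_one (N : ℕ) (hN : 0 < N) :
    |∑ d ∈ Finset.Icc 1 N, (moebius d : ℝ) / (d : ℝ)| ≤ 1 := by
  have h1N : (1:ℕ) ∈ Finset.Icc 1 N := Finset.mem_Icc.2 ⟨le_refl 1, hN⟩
  have hNR : (0:ℝ) < N := by exact_mod_cast hN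
  rw [abs_le]
  have key : (∑ d ∈ Finset.Icc 1 N, (moebius d : ℝ) * (N / d : ℕ)) = 1 := by
    have h := key_identity N hN
    have h2 : ((∑ d ∈ Finset.Icc 1 N, (moebius d : ℤ) * (N / d : ℕ) : ℤ) : ℝ) = 1 := by
      rw [h]; norm_num
    push_cast at h2
    exact h2
  set S := ∑ d ∈ Finset.Icc 1 N, (moebius d : ℝ) / (d : ℝ) with hS
  have hNS : (N:ℝ) * S = ∑ d ∈ Finset.Icc 1 N, (moebius d : ℝ) * ((N:ℝ) / d) := by
    rw [hS, Finset.mul_sum]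
    exact Finset.sum_congr rfl fun d _ => by ring
  have hsplit : (N:ℝ) * S = 1 + ∑ d ∈ Finset.Icc 1 N,
      (moebius d : ℝ) * ((N:ℝ) / d - (N / d : ℕ)) := by
    rw [hNS, ← key, ← Finset.sum_add_distrib]
    exact Finset.sum_congr rfl fun d _ => by ring
  have herr : |∑ d ∈ Finset.Icc 1 N,
      (moebius d : ℝ) * ((N:ℝ) / d - (N / d : ℕ))| ≤ (N:ℝ) - 1 := by
    calc |∑ d ∈ Finset.Icc 1 N, (moebius d : ℝ) * ((N:ℝ) / d - (N / d : ℕ))|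
        ≤ ∑ d ∈ Finset.Icc 1 N, |(moebius d : ℝ) * ((N:ℝ) / d - (N / d : ℕ))| :=
          Finset.abs_sum_le_sum_abs _ _
      _ ≤ ∑ d ∈ Finset.Icc 1 N, if d = 1 then 0 else 1 := by
          apply Finset.sum_le_sum
          intro d hd
          simp only [Finset.mem_Icc] at hd
          have hd0 : (0:ℝ) < d := by exact_mod_cast hd.1
          have hfrac0 : (0:ℝ) ≤ (N:ℝ) / d - (N / d : ℕ) := by
            rw [sub_nonneg, le_div_iff₀ hd0]
            exact_mod_cast Nat.div_mul_le_self N d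
          have hfrac1 : (N:ℝ) / d - (N / d : ℕ) < 1 := by
            rw [sub_lt_iff_lt_add, div_lt_iff₀ hd0]
            calc (N:ℝ) < ((N / d : ℕ) * d + d : ℕ) := by
                  exact_mod_cast Nat.lt_div_mul_add hd.1
              _ = (1 + (N / d : ℕ)) * d := by push_cast; ring
          by_cases h1 : d = 1
          · subst h1; simp
          · simp only [h1, if_false]
            rw [abs_mul]
            have hmu : |(moebius d : ℝ)| ≤ 1 := by
              exact_mod_cast abs_moebius_le_one (n := d)
            have hfr : |(N:ℝ) / d - (N / d : ℕ)| ≤ 1 := by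
              rw [abs_of_nonneg hfrac0]; exact hfrac1.le
            calc |(moebius d : ℝ)| * |(N:ℝ) / d - (N / d : ℕ)| ≤ 1 * 1 :=
                  mul_le_mul hmu hfr (abs_nonneg _) zero_le_one
              _ = 1 := by ring
      _ = (N:ℝ) - 1 := by
          have hrw : ∀ d ∈ Finset.Icc 1 N, (if d = 1 then (0:ℝ) else 1)
              = 1 - (if d = 1 then 1 else 0) := by
            intro d _; split <;> norm_num
          rw [Finset.sum_congr rfl hrw, Finset.sum_sub_distrib, Finset.sum_const,
            Finset.sum_ite_eq' (Finset.Icc 1 N) 1 (fun _ => (1:ℝ)), if_pos h1N]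
          simp [Nat.card_Icc]
  constructor
  · nlinarith [(abs_le.1 herr).1, (abs_le.1 herr).2]
  · nlinarith [(abs_le.1 herr).1, (abs_le.1 herr).2]
end

section
/- For every integer Q ≥ 2, the sum Σ_{d=1}^{Q} μ(d)/d⁴ · 1/⌊Q/d⌋² differs from 6/(π²Q²) by at most (64 + 8 log Q)/Q³ in absolute value. -/
open ArithmeticFunction Real
open scoped ArithmeticFunction.Moebius

private lemma summable_moe : Summable (fun n : ℕ => (μ n : ℝ) / (n : ℝ) ^ 2) := by
  apply Summable.of_norm_bounded (g := fun n : ℕ => 1 / (n : ℝ) ^ 2)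
  · exact (Real.summable_one_div_nat_pow).mpr one_lt_two
  · intro n
    rcases Nat.eq_zero_or_pos n with h | h
    · simp [h]
    · rw [Real.norm_eq_abs, abs_div, abs_pow, Nat.abs_cast]
      have h1 : |((μ n : ℤ) : ℝ)| ≤ 1 := by
        rw [← Int.cast_abs]; exact_mod_cast abs_moebius_le_one (n := n)
      gcongr

private lemma tsum_moe : ∑' n : ℕ, (μ n : ℝ) / (n : ℝ) ^ 2 = 6 / π ^ 2 := by
  have h2 : (1 : ℝ) < (2 : ℂ).re := by norm_num
  have h := LSeries_zeta_mul_Lseries_moebius (s := 2) h2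
  rw [LSeries_zeta_eq_riemannZeta h2, riemannZeta_two] at h
  have hL : LSeries (fun n => ((μ n : ℤ) : ℂ)) 2
      = ((∑' n : ℕ, (μ n : ℝ) / (n : ℝ) ^ 2 : ℝ) : ℂ) := by
    rw [Complex.ofReal_tsum]
    apply tsum_congr
    intro n
    rcases Nat.eq_zero_or_pos n with h0 | h0
    · simp [h0, LSeries.term]
    · rw [LSeries.term_def, if_neg (Nat.pos_iff_ne_zero.mp h0)]
      rw [show (2 : ℂ) = ((2 : ℕ) : ℂ) by norm_num, Complex.cpow_natCast]
      push_cast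
      ring
  rw [hL] at h
  have hπ : (π : ℝ) ≠ 0 := Real.pi_ne_zero
  have : ((∑' n : ℕ, (μ n : ℝ) / (n : ℝ) ^ 2 : ℝ) : ℂ) = ((6 / π ^ 2 : ℝ) : ℂ) := by
    have hπC : ((π : ℂ)) ^ 2 ≠ 0 := by
      exact pow_ne_zero 2 (by exact_mod_cast hπ)
    rw [Complex.ofReal_div, Complex.ofReal_pow, Complex.ofReal_ofNat, eq_div_iff hπC]
    linear_combination 6 * h
  exact_mod_cast this

private lemma term_bound (Q d : ℕ) (hd : 1 ≤ d) (hdQ : d ≤ Q) :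
    |(μ d : ℝ) / (d : ℝ) ^ 4 * (1 / ((Q / d : ℕ) : ℝ) ^ 2) - (μ d : ℝ) / (d : ℝ) ^ 2 / (Q : ℝ) ^ 2|
      ≤ 8 / ((d : ℝ) * (Q : ℝ) ^ 3) := by
  set m : ℕ := Q / d with hm
  have hm1 : 1 ≤ m := (Nat.one_le_div_iff hd).mpr hdQ
  have hmd : m * d ≤ Q := Nat.div_mul_le_self Q d
  have hQlt : Q < m * d + d := by
    have h1 : d * m + Q % d = Q := by rw [hm]; exact Nat.div_add_mod Q d
    calc Q = d * m + Q % d := h1.symm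
      _ < d * m + d := Nat.add_lt_add_left (Nat.mod_lt Q hd) _
      _ = m * d + d := by rw [Nat.mul_comm]
  -- real versions
  have hM : (1 : ℝ) ≤ (m : ℝ) := by exact_mod_cast hm1
  have hD : (1 : ℝ) ≤ (d : ℝ) := by exact_mod_cast hd
  have hMD : (m : ℝ) * (d : ℝ) ≤ (Q : ℝ) := by exact_mod_cast hmd
  have hQlt' : (Q : ℝ) < (m : ℝ) * (d : ℝ) + (d : ℝ) := by exact_mod_cast hQlt
  have hQpos : (0 : ℝ) < (Q : ℝ) := by
    have : (1:ℝ) ≤ (Q:ℝ) := by exact_mod_cast hd.trans hdQ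
    linarith
  have hMpos : (0 : ℝ) < (m : ℝ) := by linarith
  have hDpos : (0 : ℝ) < (d : ℝ) := by linarith
  have hμ : |((μ d : ℤ) : ℝ)| ≤ 1 := by
    rw [← Int.cast_abs]; exact_mod_cast abs_moebius_le_one (n := d)
  have hfac : (μ d : ℝ) / (d : ℝ) ^ 4 * (1 / ((m : ℕ) : ℝ) ^ 2) - (μ d : ℝ) / (d : ℝ) ^ 2 / (Q : ℝ) ^ 2
      = (μ d : ℝ) / (d : ℝ) ^ 4 * (1 / (m : ℝ) ^ 2 - (d : ℝ) ^ 2 / (Q : ℝ) ^ 2) := by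
    field_simp
  rw [hfac, abs_mul]
  have hnn : 0 ≤ 1 / (m : ℝ) ^ 2 - (d : ℝ) ^ 2 / (Q : ℝ) ^ 2 := by
    rw [sub_nonneg, div_le_div_iff₀ (by positivity) (by positivity)]
    nlinarith [mul_le_mul hMD hMD (by positivity) hQpos.le]
  rw [abs_of_nonneg hnn]
  have key : 1 / (m : ℝ) ^ 2 - (d : ℝ) ^ 2 / (Q : ℝ) ^ 2 ≤ 8 * (d : ℝ) ^ 3 / (Q : ℝ) ^ 3 := by
    rw [div_sub_div _ _ (by positivity) (by positivity), div_le_div_iff₀ (by positivity) (by positivity)]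
    have h1 : (Q : ℝ) - (m : ℝ) * (d : ℝ) ≤ (d : ℝ) := by linarith
    have h2 : (Q : ℝ) ≤ 2 * (m : ℝ) * (d : ℝ) := by nlinarith
    have hA : (Q:ℝ)^2 - (m:ℝ)^2*(d:ℝ)^2 ≤ 2*(d:ℝ)*(Q:ℝ) := by
      nlinarith [mul_le_mul h1 (show (Q:ℝ) + (m:ℝ)*(d:ℝ) ≤ 2*(Q:ℝ) by linarith)
        (by positivity) (by linarith : (0:ℝ) ≤ (d:ℝ))]
    have hB : (Q:ℝ)^2 ≤ 4*(m:ℝ)^2*(d:ℝ)^2 := by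
      nlinarith [mul_le_mul h2 h2 hQpos.le (by positivity)]
    nlinarith [mul_le_mul_of_nonneg_right hA (by positivity : (0:ℝ) ≤ (Q:ℝ)^3),
      mul_le_mul_of_nonneg_left hB (by positivity : (0:ℝ) ≤ 2*(d:ℝ)*(Q:ℝ)^2)]
  have habs : |(μ d : ℝ) / (d : ℝ) ^ 4| ≤ 1 / (d : ℝ) ^ 4 := by
    rw [abs_div, abs_pow, abs_of_nonneg hDpos.le]
    gcongr
  calc |(μ d : ℝ) / (d : ℝ) ^ 4| * (1 / (m : ℝ) ^ 2 - (d : ℝ) ^ 2 / (Q : ℝ) ^ 2)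
      ≤ (1 / (d : ℝ) ^ 4) * (8 * (d : ℝ) ^ 3 / (Q : ℝ) ^ 3) := by
        apply mul_le_mul habs key hnn (by positivity)
    _ = 8 / ((d : ℝ) * (Q : ℝ) ^ 3) := by field_simp

private lemma tail_g_hasSum (Q : ℕ) (hQ : 1 ≤ Q) :
    HasSum (fun k : ℕ => 1 / ((k : ℝ) + Q) - 1 / ((k : ℝ) + Q + 1)) (1 / Q) := by
  have hnn : ∀ k : ℕ, 0 ≤ 1 / ((k : ℝ) + Q) - 1 / ((k : ℝ) + Q + 1) := by
    intro k
    have h1 : (0:ℝ) < (k : ℝ) + Q := by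
      have : (1:ℝ) ≤ (Q:ℝ) := by exact_mod_cast hQ
      positivity
    rw [sub_nonneg]
    exact one_div_le_one_div_of_le h1 (by linarith)
  rw [hasSum_iff_tendsto_nat_of_nonneg hnn]
  have hps : ∀ n : ℕ, ∑ k ∈ Finset.range n, (1 / ((k : ℝ) + Q) - 1 / ((k : ℝ) + Q + 1))
      = 1 / ((0 : ℕ) + (Q:ℝ)) - 1 / ((n : ℕ) + (Q:ℝ)) := by
    intro n
    have := Finset.sum_range_sub' (fun k : ℕ => 1 / ((k : ℝ) + Q)) n
    simpa [add_assoc, add_comm, add_left_comm] using this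
  simp only [hps]
  have ht : Filter.Tendsto (fun n : ℕ => 1 / ((n : ℕ) + (Q:ℝ))) Filter.atTop (nhds 0) := by
    simp only [one_div]
    apply Filter.Tendsto.inv_tendsto_atTop
    exact Filter.tendsto_atTop_add_const_right _ _ tendsto_natCast_atTop_atTop
  have := (tendsto_const_nhds (x := 1 / ((0:ℕ) + (Q:ℝ))) (f := Filter.atTop (α := ℕ))).sub ht
  simpa using this

private lemma tail_bound (Q : ℕ) (hQ : 1 ≤ Q) :
    |∑' k : ℕ, (μ (k + (Q + 1)) : ℝ) / ((k + (Q + 1) : ℕ) : ℝ) ^ 2| ≤ 1 / Q := by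
  have hQR : (1:ℝ) ≤ (Q:ℝ) := by exact_mod_cast hQ
  have hsum : Summable (fun k : ℕ => (μ (k + (Q + 1)) : ℝ) / ((k + (Q + 1) : ℕ) : ℝ) ^ 2) :=
    (summable_nat_add_iff (f := fun n : ℕ => (μ n : ℝ) / (n : ℝ) ^ 2) (Q + 1)).mpr summable_moe
  have hg := tail_g_hasSum Q hQ
  have hbd : ∀ k : ℕ, |(μ (k + (Q + 1)) : ℝ) / ((k + (Q + 1) : ℕ) : ℝ) ^ 2|
      ≤ 1 / ((k : ℝ) + Q) - 1 / ((k : ℝ) + Q + 1) := by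
    intro k
    have hx : (0:ℝ) < (k : ℝ) + Q := by positivity
    have hcast : ((k + (Q + 1) : ℕ) : ℝ) = (k : ℝ) + Q + 1 := by push_cast; ring
    have hμ : |((μ (k + (Q + 1)) : ℤ) : ℝ)| ≤ 1 := by
      rw [← Int.cast_abs]; exact_mod_cast abs_moebius_le_one
    rw [abs_div, abs_pow, hcast, show |(k:ℝ) + Q + 1| = (k:ℝ) + Q + 1 from abs_of_pos (by linarith)]
    have h1 : |((μ (k + (Q + 1)) : ℤ) : ℝ)| / ((k : ℝ) + Q + 1) ^ 2 ≤ 1 / ((k : ℝ) + Q + 1) ^ 2 := by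
      gcongr
    refine h1.trans ?_
    rw [div_sub_div _ _ (ne_of_gt hx) (by linarith)]
    rw [div_le_div_iff₀ (by positivity) (by positivity)]
    nlinarith
  calc |∑' k : ℕ, (μ (k + (Q + 1)) : ℝ) / ((k + (Q + 1) : ℕ) : ℝ) ^ 2|
      ≤ ∑' k : ℕ, |(μ (k + (Q + 1)) : ℝ) / ((k + (Q + 1) : ℕ) : ℝ) ^ 2| := by
        simpa only [Real.norm_eq_abs] using norm_tsum_le_tsum_norm (f := fun k : ℕ =>
          (μ (k + (Q + 1)) : ℝ) / ((k + (Q + 1) : ℕ) : ℝ) ^ 2) hsum.abs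
    _ ≤ ∑' k : ℕ, (1 / ((k : ℝ) + Q) - 1 / ((k : ℝ) + Q + 1)) :=
        Summable.tsum_le_tsum hbd hsum.abs hg.summable
    _ = 1 / Q := hg.tsum_eq

theorem moebius_floor_sum_estimate (Q : ℕ) (hQ : 2 ≤ Q) :
    |(∑ d ∈ Finset.Icc 1 Q, (moebius d : ℝ) / (d : ℝ) ^ 4 * (1 / ((Q / d : ℕ) : ℝ) ^ 2))
      - 6 / (Real.pi ^ 2 * (Q : ℝ) ^ 2)| ≤ (64 + 8 * Real.log Q) / (Q : ℝ) ^ 3 := by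
  have hQ1 : 1 ≤ Q := le_trans one_le_two hQ
  have hQR2 : (2:ℝ) ≤ (Q:ℝ) := by exact_mod_cast hQ
  have hQpos : (0:ℝ) < (Q:ℝ) := by linarith
  have hsplit : ∑ d ∈ Finset.range (Q+1), (μ d : ℝ) / (d : ℝ) ^ 2
      + ∑' k, (μ (k + (Q+1)) : ℝ) / ((k + (Q+1) : ℕ) : ℝ) ^ 2
      = ∑' n : ℕ, (μ n : ℝ) / (n : ℝ) ^ 2 :=
    Summable.sum_add_tsum_nat_add (f := fun n : ℕ => (μ n : ℝ) / (n : ℝ) ^ 2) (Q+1) summable_moe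
  have hrange : ∑ d ∈ Finset.range (Q+1), (μ d : ℝ) / (d : ℝ) ^ 2
      = ∑ d ∈ Finset.Icc 1 Q, (μ d : ℝ) / (d : ℝ) ^ 2 := by
    have he : Finset.range (Q+1) = insert 0 (Finset.Icc 1 Q) := by
      ext x; simp only [Finset.mem_range, Finset.mem_insert, Finset.mem_Icc]; omega
    rw [he, Finset.sum_insert (by simp)]
    simp
  have hT : 6 / (π ^ 2 * (Q:ℝ) ^ 2)
      = ∑ d ∈ Finset.Icc 1 Q, (μ d : ℝ) / (d : ℝ) ^ 2 / (Q:ℝ)^2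
        + (∑' k, (μ (k + (Q+1)) : ℝ) / ((k + (Q+1) : ℕ) : ℝ) ^ 2) / (Q:ℝ)^2 := by
    rw [← Finset.sum_div, ← hrange, ← add_div, hsplit, tsum_moe, div_div]
  rw [hT]
  have hexp : (∑ d ∈ Finset.Icc 1 Q, (μ d : ℝ) / (d : ℝ) ^ 4 * (1 / ((Q / d : ℕ) : ℝ) ^ 2))
      - (∑ d ∈ Finset.Icc 1 Q, (μ d : ℝ) / (d : ℝ) ^ 2 / (Q:ℝ)^2
        + (∑' k, (μ (k + (Q+1)) : ℝ) / ((k + (Q+1) : ℕ) : ℝ) ^ 2) / (Q:ℝ)^2)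
      = (∑ d ∈ Finset.Icc 1 Q, ((μ d : ℝ) / (d : ℝ) ^ 4 * (1 / ((Q / d : ℕ) : ℝ) ^ 2)
          - (μ d : ℝ) / (d : ℝ) ^ 2 / (Q:ℝ)^2))
        - (∑' k, (μ (k + (Q+1)) : ℝ) / ((k + (Q+1) : ℕ) : ℝ) ^ 2) / (Q:ℝ)^2 := by
    rw [Finset.sum_sub_distrib]; ring
  rw [hexp]
  calc |(∑ d ∈ Finset.Icc 1 Q, ((μ d : ℝ) / (d : ℝ) ^ 4 * (1 / ((Q / d : ℕ) : ℝ) ^ 2)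
          - (μ d : ℝ) / (d : ℝ) ^ 2 / (Q:ℝ)^2))
        - (∑' k, (μ (k + (Q+1)) : ℝ) / ((k + (Q+1) : ℕ) : ℝ) ^ 2) / (Q:ℝ)^2|
      ≤ |∑ d ∈ Finset.Icc 1 Q, ((μ d : ℝ) / (d : ℝ) ^ 4 * (1 / ((Q / d : ℕ) : ℝ) ^ 2)
          - (μ d : ℝ) / (d : ℝ) ^ 2 / (Q:ℝ)^2)|
        + |(∑' k, (μ (k + (Q+1)) : ℝ) / ((k + (Q+1) : ℕ) : ℝ) ^ 2) / (Q:ℝ)^2| := abs_sub _ _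
    _ ≤ (∑ d ∈ Finset.Icc 1 Q, 8 / ((d:ℝ) * (Q:ℝ)^3)) + (1 / (Q:ℝ)) / (Q:ℝ)^2 := by
        apply add_le_add
        · refine (Finset.abs_sum_le_sum_abs _ _).trans ?_
          apply Finset.sum_le_sum
          intro d hd
          rw [Finset.mem_Icc] at hd
          exact term_bound Q d hd.1 hd.2
        · rw [abs_div, abs_of_nonneg (by positivity : (0:ℝ) ≤ (Q:ℝ)^2)]
          gcongr
          exact tail_bound Q hQ1
    _ = 8 / (Q:ℝ)^3 * (∑ d ∈ Finset.Icc 1 Q, (d:ℝ)⁻¹) + 1 / (Q:ℝ)^3 := by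
        rw [Finset.mul_sum]
        congr 1
        · apply Finset.sum_congr rfl
          intro d hd
          rw [Finset.mem_Icc] at hd
          have hd0 : (d:ℝ) ≠ 0 := by
            have : (1:ℝ) ≤ (d:ℝ) := by exact_mod_cast hd.1
            linarith
          field_simp
        · rw [div_div, ← pow_succ']
    _ ≤ 8 / (Q:ℝ)^3 * (1 + Real.log Q) + 1 / (Q:ℝ)^3 := by
        have h := harmonic_le_one_add_log Q
        rw [harmonic_eq_sum_Icc] at h
        push_cast at h
        gcongr
    _ ≤ (64 + 8 * Real.log Q) / (Q:ℝ)^3 := by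
        have hlog : 0 ≤ Real.log Q := Real.log_nonneg (by linarith)
        have heq : 8 / (Q:ℝ)^3 * (1 + Real.log Q) + 1 / (Q:ℝ)^3
            = (9 + 8 * Real.log Q) / (Q:ℝ)^3 := by
          field_simp
          ring
        rw [heq]
        gcongr
        linarith
end
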